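/- Let $L(x) = A_0 + \sum_{j=1}^g A_j x_j$ with $A_j \in \mathbb{C}^{d \times e}$, $d \geq e$, let $D \in \mathbb{C}^{e \times d}$ satisfy $\mathrm{Re}(DA_j) = 0$ for $j \geq 1$ and $\mathrm{Re}(DA_0) \succeq 0$, and let $V$ be a matrix whose columns form a basis of $\ker \mathrm{Re}(DA_0)$. Fix Hermitian $n \times n$ matrices $X_1, \dots, X_g$. If $(LV)(X) := L(X)(V \otimes I_n)$ is injective, then $L(X)$ is injective. -/

import Mathlib

open Matrix
open scoped ComplexOrder Kronecker

private lemma kron_conjTranspose {l m p q : Type*} (A : Matrix l m ℂ) (B : Matrix p q ℂ) :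
    (A ⊗ₖ B)ᴴ = Aᴴ ⊗ₖ Bᴴ := by
  ext ⟨i, t⟩ ⟨j, s⟩
  simp [conjTranspose_apply, kroneckerMap_apply, mul_comm]

theorem stmt_13 (d e g k n : ℕ) (hde : e ≤ d)
    (A0 : Matrix (Fin d) (Fin e) ℂ) (A : Fin g → Matrix (Fin d) (Fin e) ℂ)
    (D : Matrix (Fin e) (Fin d) ℂ)
    (hRej : ∀ j, (1 / 2 : ℂ) • (D * A j + (D * A j)ᴴ) = 0)
    (hRe0 : ((1 / 2 : ℂ) • (D * A0 + (D * A0)ᴴ)).PosSemidef)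
    (V : Matrix (Fin e) (Fin k) ℂ)
    -- the columns of `V` are linearly independent and span the kernel of `Re (D * A0)`
    (hVinj : Function.Injective V.mulVec)
    (hVker : ∀ v : Fin e → ℂ,
      ((1 / 2 : ℂ) • (D * A0 + (D * A0)ᴴ)).mulVec v = 0 ↔ ∃ c : Fin k → ℂ, v = V.mulVec c)
    (X : Fin g → Matrix (Fin n) (Fin n) ℂ) (hX : ∀ j, (X j).IsHermitian)
    (hLV : Function.Injective
      (((A0 ⊗ₖ (1 : Matrix (Fin n) (Fin n) ℂ) + ∑ j, A j ⊗ₖ X j) *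
        (V ⊗ₖ (1 : Matrix (Fin n) (Fin n) ℂ))).mulVec)) :
    Function.Injective ((A0 ⊗ₖ (1 : Matrix (Fin n) (Fin n) ℂ) + ∑ j, A j ⊗ₖ X j)).mulVec := by
  set L : Matrix (Fin d × Fin n) (Fin e × Fin n) ℂ :=
    A0 ⊗ₖ (1 : Matrix (Fin n) (Fin n) ℂ) + ∑ j, A j ⊗ₖ X j with hL
  set P : Matrix (Fin e) (Fin e) ℂ := (1 / 2 : ℂ) • (D * A0 + (D * A0)ᴴ) with hP
  -- it suffices to show the kernel is trivial
  intro x y hxy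
  have hker : L.mulVec (x - y) = 0 := by
    rw [mulVec_sub, hxy, sub_self]
  set w : Fin e × Fin n → ℂ := x - y with hw
  -- key identity: Re((D ⊗ 1) * L) = P ⊗ 1
  have hDA : ∀ j, D * A j + (D * A j)ᴴ = 0 := by
    intro j
    have := hRej j
    have h2 : (2 : ℂ) ≠ 0 := two_ne_zero
    have := congrArg (fun M => (2 : ℂ) • M) this
    simpa [smul_smul, h2] using this
  have hRe : (1 / 2 : ℂ) • ((D ⊗ₖ (1 : Matrix (Fin n) (Fin n) ℂ)) * L
      + ((D ⊗ₖ (1 : Matrix (Fin n) (Fin n) ℂ)) * L)ᴴ)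
      = P ⊗ₖ (1 : Matrix (Fin n) (Fin n) ℂ) := by
    have hmul : (D ⊗ₖ (1 : Matrix (Fin n) (Fin n) ℂ)) * L
        = (D * A0) ⊗ₖ (1 : Matrix (Fin n) (Fin n) ℂ) + ∑ j, (D * A j) ⊗ₖ X j := by
      rw [hL, Matrix.mul_add, Matrix.mul_sum]
      congr 1
      · rw [← mul_kronecker_mul, one_mul]
      · refine Finset.sum_congr rfl fun j _ => ?_
        rw [← mul_kronecker_mul, one_mul]
    rw [hmul]
    rw [conjTranspose_add, conjTranspose_sum, kron_conjTranspose]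
    have hXj : ∀ j, ((D * A j) ⊗ₖ X j)ᴴ = (D * A j)ᴴ ⊗ₖ X j := by
      intro j
      rw [kron_conjTranspose, (hX j).eq]
    simp only [hXj, conjTranspose_one]
    have : (D * A0) ⊗ₖ (1 : Matrix (Fin n) (Fin n) ℂ) + ∑ j, (D * A j) ⊗ₖ X j
        + ((D * A0)ᴴ ⊗ₖ (1 : Matrix (Fin n) (Fin n) ℂ) + ∑ j, (D * A j)ᴴ ⊗ₖ X j)
        = (D * A0 + (D * A0)ᴴ) ⊗ₖ (1 : Matrix (Fin n) (Fin n) ℂ)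
          + ∑ j, (D * A j + (D * A j)ᴴ) ⊗ₖ X j := by
      simp only [add_kronecker, Finset.sum_add_distrib]
      abel
    rw [this]
    have : ∑ j, (D * A j + (D * A j)ᴴ) ⊗ₖ X j = 0 := by
      refine Finset.sum_eq_zero fun j _ => ?_
      rw [hDA j, zero_kronecker]
    rw [this, add_zero, hP, smul_kronecker]
  -- hence star w ⬝ᵥ (P ⊗ 1) w = 0
  have hdot : star w ⬝ᵥ (P ⊗ₖ (1 : Matrix (Fin n) (Fin n) ℂ)).mulVec w = 0 := by
    rw [← hRe]
    set N := (D ⊗ₖ (1 : Matrix (Fin n) (Fin n) ℂ)) * L with hN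
    have h1 : N.mulVec w = 0 := by
      rw [hN, ← mulVec_mulVec, hker, mulVec_zero]
    have h2 : star w ⬝ᵥ Nᴴ.mulVec w = 0 := by
      rw [dotProduct_mulVec, ← star_mulVec, h1, star_zero, zero_dotProduct]
    rw [smul_mulVec, dotProduct_smul, add_mulVec, dotProduct_add, h1, dotProduct_zero,
      zero_add, h2, smul_zero]
  -- columns (slices) of w lie in ker P
  have hslice : ∀ t : Fin n, P.mulVec (fun j => w (j, t)) = 0 := by
    have hsum : ∑ t : Fin n, star (fun j => w (j, t)) ⬝ᵥ P.mulVec (fun j => w (j, t)) = 0 := by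
      rw [← hdot]
      simp only [dotProduct, mulVec, Fintype.sum_prod_type, kroneckerMap_apply, one_apply,
        Pi.star_apply, mul_ite, mul_one, mul_zero, ite_mul, zero_mul, Finset.sum_ite_eq,
        Finset.mem_univ, if_true]
      rw [Finset.sum_comm]
    intro t
    rw [← hRe0.dotProduct_mulVec_zero_iff]
    have hnn : ∀ t ∈ Finset.univ, (0:ℂ) ≤ star (fun j => w (j, t)) ⬝ᵥ P.mulVec (fun j => w (j, t)) :=
      fun t _ => hRe0.dotProduct_mulVec_nonneg _
    exact (Finset.sum_eq_zero_iff_of_nonneg hnn).mp hsum t (Finset.mem_univ t)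
  -- so w = (V ⊗ 1) c for some c
  have hc : ∀ t : Fin n, ∃ c : Fin k → ℂ, (fun j => w (j, t)) = V.mulVec c :=
    fun t => (hVker _).mp (hslice t)
  choose c hcspec using hc
  set C : Fin k × Fin n → ℂ := fun p => c p.2 p.1 with hC
  have hwC : w = (V ⊗ₖ (1 : Matrix (Fin n) (Fin n) ℂ)).mulVec C := by
    funext ⟨j, t⟩
    have := congrFun (hcspec t) j
    rw [this]
    simp only [mulVec, dotProduct, Fintype.sum_prod_type, kroneckerMap_apply, one_apply, hC,
      mul_ite, mul_one, mul_zero, ite_mul, zero_mul, Finset.sum_ite_eq, Finset.mem_univ, if_true]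
  -- conclude via injectivity of L * (V ⊗ 1)
  have hC0 : C = 0 := by
    apply hLV
    rw [mulVec_zero, ← mulVec_mulVec, ← hwC]
    exact hker
  have : w = 0 := by rw [hwC, hC0, mulVec_zero]
  exact sub_eq_zero.mp this
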